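/- (The 3×3 zero-diagonal matrix model has ML degree 2.) Let g = p_{12}p_{23}p_{31} + p_{13}p_{21}p_{32} ∈ ℚ[p_{12},p_{13},p_{21},p_{23},p_{31},p_{32}] (the determinant of the zero-diagonal matrix [[0,p_{12},p_{13}],[p_{21},0,p_{23}],[p_{31},p_{32},0]]), and consider the polynomials F_{ij} = p_{ij}·(λ_1 + (∂g/∂p_{ij})·λ_2) − u_{ij} for the six index pairs (i,j) ∈ {(1,2),(1,3),(2,1),(2,3),(3,1),(3,2)}, together with F = g and F' = p_{12} + p_{13} + p_{21} + p_{23} + p_{31} + p_{32} − 1. There exists a nonzero polynomial H in the six variables u_{ij} such that for every u ∈ ℂ^6 with H(u) ≠ 0, the set of (p_{12},p_{13},p_{21},p_{23},p_{31},p_{32},λ_1,λ_2) ∈ ℂ^8 satisfying all eight equations has exactly 2 elements. -/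

import Mathlib

open MvPolynomial

noncomputable section

/-- The determinant of the 3×3 zero-diagonal matrix
`[[0, p₁₂, p₁₃], [p₂₁, 0, p₂₃], [p₃₁, p₃₂, 0]]`, namely
`p₁₂p₂₃p₃₁ + p₁₃p₂₁p₃₂`, in the variables `p₁₂, p₁₃, p₂₁, p₂₃, p₃₁, p₃₂`
(indices `0, 1, 2, 3, 4, 5`). -/
def zeroDiagG : MvPolynomial (Fin 6) ℂ :=
  X 0 * X 3 * X 4 + X 1 * X 2 * X 5

def mlS (u : Fin 6 → ℂ) : ℂ := u 0 + u 1 + u 2 + u 3 + u 4 + u 5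

def mlB (u : Fin 6 → ℂ) : ℂ :=
  (u 1 * u 2 + u 1 * u 5 + u 2 * u 5) - (u 0 * u 3 + u 0 * u 4 + u 3 * u 4)

def mlC (u : Fin 6 → ℂ) : ℂ := u 0 * u 3 * u 4 + u 1 * u 2 * u 5

def mlF (u : Fin 6 → ℂ) (x : ℂ) : ℂ := mlS u * x ^ 2 + mlB u * x + mlC u

def mlSol (u : Fin 6 → ℂ) (a : ℂ) : (Fin 6 → ℂ) × (Fin 2 → ℂ) :=
  (![(u 0 - a) / mlS u, (u 1 + a) / mlS u, (u 2 + a) / mlS u,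
     (u 3 - a) / mlS u, (u 4 - a) / mlS u, (u 5 + a) / mlS u],
   ![mlS u, a * (mlS u) ^ 3 / ((u 0 - a) * (u 3 - a) * (u 4 - a))])

def mlH : MvPolynomial (Fin 6) ℂ :=
  (X 0 + X 1 + X 2 + X 3 + X 4 + X 5) *
    (((X 1 * X 2 + X 1 * X 5 + X 2 * X 5) - (X 0 * X 3 + X 0 * X 4 + X 3 * X 4)) ^ 2 -
      C 4 * (X 0 + X 1 + X 2 + X 3 + X 4 + X 5) * (X 0 * X 3 * X 4 + X 1 * X 2 * X 5)) *
    ((X 0 + X 1 + X 2 + X 3 + X 4 + X 5) * (X 0) ^ 2 +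
      ((X 1 * X 2 + X 1 * X 5 + X 2 * X 5) - (X 0 * X 3 + X 0 * X 4 + X 3 * X 4)) * X 0 +
      (X 0 * X 3 * X 4 + X 1 * X 2 * X 5)) *
    ((X 0 + X 1 + X 2 + X 3 + X 4 + X 5) * (X 3) ^ 2 +
      ((X 1 * X 2 + X 1 * X 5 + X 2 * X 5) - (X 0 * X 3 + X 0 * X 4 + X 3 * X 4)) * X 3 +
      (X 0 * X 3 * X 4 + X 1 * X 2 * X 5)) *
    ((X 0 + X 1 + X 2 + X 3 + X 4 + X 5) * (X 4) ^ 2 +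
      ((X 1 * X 2 + X 1 * X 5 + X 2 * X 5) - (X 0 * X 3 + X 0 * X 4 + X 3 * X 4)) * X 4 +
      (X 0 * X 3 * X 4 + X 1 * X 2 * X 5))

lemma mlSol10 (u : Fin 6 → ℂ) (a : ℂ) : (mlSol u a).1 0 = (u 0 - a) / mlS u := rfl
lemma mlSol11 (u : Fin 6 → ℂ) (a : ℂ) : (mlSol u a).1 1 = (u 1 + a) / mlS u := rfl
lemma mlSol12 (u : Fin 6 → ℂ) (a : ℂ) : (mlSol u a).1 2 = (u 2 + a) / mlS u := rfl
lemma mlSol13 (u : Fin 6 → ℂ) (a : ℂ) : (mlSol u a).1 3 = (u 3 - a) / mlS u := rfl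
lemma mlSol14 (u : Fin 6 → ℂ) (a : ℂ) : (mlSol u a).1 4 = (u 4 - a) / mlS u := rfl
lemma mlSol15 (u : Fin 6 → ℂ) (a : ℂ) : (mlSol u a).1 5 = (u 5 + a) / mlS u := rfl
lemma mlSol20 (u : Fin 6 → ℂ) (a : ℂ) : (mlSol u a).2 0 = mlS u := rfl
lemma mlSol21 (u : Fin 6 → ℂ) (a : ℂ) :
    (mlSol u a).2 1 = a * (mlS u) ^ 3 / ((u 0 - a) * (u 3 - a) * (u 4 - a)) := rfl

lemma eval_mlH (u : Fin 6 → ℂ) :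
    eval u mlH = mlS u * (mlB u ^ 2 - 4 * mlS u * mlC u) *
      mlF u (u 0) * mlF u (u 3) * mlF u (u 4) := by
  simp [mlH, mlS, mlB, mlC, mlF]

lemma mlH_ne_zero : mlH ≠ 0 := by
  intro h
  have h1 : eval (fun _ => (1 : ℂ)) mlH = 0 := by rw [h]; simp
  rw [eval_mlH] at h1
  simp only [mlS, mlB, mlC, mlF] at h1
  norm_num at h1

lemma cond_iff (u p : Fin 6 → ℂ) (L : Fin 2 → ℂ) :
    ((∀ i : Fin 6, p i * (L 0 + eval p (pderiv i zeroDiagG) * L 1) = u i) ∧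
      eval p zeroDiagG = 0 ∧ p 0 + p 1 + p 2 + p 3 + p 4 + p 5 = 1)
    ↔ (p 0 * (L 0 + p 3 * p 4 * L 1) = u 0 ∧
       p 1 * (L 0 + p 2 * p 5 * L 1) = u 1 ∧
       p 2 * (L 0 + p 1 * p 5 * L 1) = u 2 ∧
       p 3 * (L 0 + p 0 * p 4 * L 1) = u 3 ∧
       p 4 * (L 0 + p 0 * p 3 * L 1) = u 4 ∧
       p 5 * (L 0 + p 1 * p 2 * L 1) = u 5 ∧
       p 0 * p 3 * p 4 + p 1 * p 2 * p 5 = 0 ∧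
       p 0 + p 1 + p 2 + p 3 + p 4 + p 5 = 1) := by
  constructor
  · rintro ⟨h1, h2, h3⟩
    have g0 := h1 0; have g1 := h1 1; have g2 := h1 2
    have g3 := h1 3; have g4 := h1 4; have g5 := h1 5
    simp [zeroDiagG] at g0 g1 g2 g3 g4 g5 h2
    exact ⟨by linear_combination g0, by linear_combination g1, by linear_combination g2,
      by linear_combination g3, by linear_combination g4, by linear_combination g5,
      by linear_combination h2, h3⟩
  · rintro ⟨e0, e1, e2, e3, e4, e5, hg, hsum⟩
    refine ⟨?_, by simp [zeroDiagG]; linear_combination hg, hsum⟩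
    intro i
    fin_cases i
    · simp [zeroDiagG]; linear_combination e0
    · simp [zeroDiagG]; linear_combination e1
    · simp [zeroDiagG]; linear_combination e2
    · simp [zeroDiagG]; linear_combination e3
    · simp [zeroDiagG]; linear_combination e4
    · simp [zeroDiagG]; linear_combination e5

set_option maxHeartbeats 1600000 in
lemma mem_sol (u : Fin 6 → ℂ) (hs : mlS u ≠ 0) (a : ℂ) (hroot : mlF u a = 0)
    (h0 : u 0 - a ≠ 0) (h3 : u 3 - a ≠ 0) (h4 : u 4 - a ≠ 0) :
    (∀ i : Fin 6, (mlSol u a).1 i *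
        ((mlSol u a).2 0 + eval (mlSol u a).1 (pderiv i zeroDiagG) * (mlSol u a).2 1) = u i) ∧
      eval (mlSol u a).1 zeroDiagG = 0 ∧
      (mlSol u a).1 0 + (mlSol u a).1 1 + (mlSol u a).1 2 + (mlSol u a).1 3 +
        (mlSol u a).1 4 + (mlSol u a).1 5 = 1 := by
  have hSdef : mlS u = u 0 + u 1 + u 2 + u 3 + u 4 + u 5 := rfl
  simp only [mlF, mlB, mlC] at hroot
  have hprod : (u 1 + a) * (u 2 + a) * (u 5 + a) = -((u 0 - a) * (u 3 - a) * (u 4 - a)) := by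
    linear_combination hroot - a ^ 2 * hSdef
  obtain ⟨q, hQ⟩ : ∃ q : ℂ, q = (u 0 - a) * (u 3 - a) * (u 4 - a) := ⟨_, rfl⟩
  have hq : q ≠ 0 := by rw [hQ]; exact mul_ne_zero (mul_ne_zero h0 h3) h4
  rw [cond_iff]
  simp only [mlSol10, mlSol11, mlSol12, mlSol13, mlSol14, mlSol15, mlSol20, mlSol21]
  rw [← hQ]
  refine ⟨?_, ?_, ?_, ?_, ?_, ?_, ?_, ?_⟩
  · field_simp
    linear_combination (-a) * hQ
  · field_simp
    linear_combination a * hprod + a * hQ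
  · field_simp
    linear_combination a * hprod + a * hQ
  · field_simp
    linear_combination (-a) * hQ
  · field_simp
    linear_combination (-a) * hQ
  · field_simp
    linear_combination a * hprod + a * hQ
  · field_simp
    linear_combination hprod
  · field_simp
    linear_combination -hSdef

lemma sol_of_cond (u : Fin 6 → ℂ) (hs : mlS u ≠ 0)
    (hne : ∀ a : ℂ, mlF u a = 0 → (u 0 - a) * (u 3 - a) * (u 4 - a) ≠ 0)
    (p : Fin 6 → ℂ) (L : Fin 2 → ℂ)
    (e0 : p 0 * (L 0 + p 3 * p 4 * L 1) = u 0)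
    (e1 : p 1 * (L 0 + p 2 * p 5 * L 1) = u 1)
    (e2 : p 2 * (L 0 + p 1 * p 5 * L 1) = u 2)
    (e3 : p 3 * (L 0 + p 0 * p 4 * L 1) = u 3)
    (e4 : p 4 * (L 0 + p 0 * p 3 * L 1) = u 4)
    (e5 : p 5 * (L 0 + p 1 * p 2 * L 1) = u 5)
    (hg : p 0 * p 3 * p 4 + p 1 * p 2 * p 5 = 0)
    (hsum : p 0 + p 1 + p 2 + p 3 + p 4 + p 5 = 1) :
    ∃ a : ℂ, mlF u a = 0 ∧ (p, L) = mlSol u a := by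
  have hSdef : mlS u = u 0 + u 1 + u 2 + u 3 + u 4 + u 5 := rfl
  have hL0 : L 0 = mlS u := by
    rw [hSdef]
    linear_combination e0 + e1 + e2 + e3 + e4 + e5 - L 0 * hsum - 3 * L 1 * hg
  set a := p 0 * p 3 * p 4 * L 1 with ha
  have hp0 : p 0 * mlS u = u 0 - a := by linear_combination e0 - p 0 * hL0 + ha
  have hp3 : p 3 * mlS u = u 3 - a := by linear_combination e3 - p 3 * hL0 + ha
  have hp4 : p 4 * mlS u = u 4 - a := by linear_combination e4 - p 4 * hL0 + ha
  have hp1 : p 1 * mlS u = u 1 + a := by linear_combination e1 - p 1 * hL0 - ha - L 1 * hg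
  have hp2 : p 2 * mlS u = u 2 + a := by linear_combination e2 - p 2 * hL0 - ha - L 1 * hg
  have hp5 : p 5 * mlS u = u 5 + a := by linear_combination e5 - p 5 * hL0 - ha - L 1 * hg
  have hfa : mlF u a = 0 := by
    simp only [mlF, mlB, mlC]
    linear_combination (-(u 3 - a) * (u 4 - a)) * hp0 + (-(mlS u) * p 0 * (u 4 - a)) * hp3 +
      (-(mlS u) ^ 2 * p 0 * p 3) * hp4 + (-(u 2 + a) * (u 5 + a)) * hp1 +
      (-(mlS u) * p 1 * (u 5 + a)) * hp2 + (-(mlS u) ^ 2 * p 1 * p 2) * hp5 +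
      (mlS u) ^ 3 * hg + a ^ 2 * hSdef
  have hq := hne a hfa
  have hm1 : p 0 * p 3 * p 4 * (mlS u) ^ 3 = (u 0 - a) * (u 3 - a) * (u 4 - a) := by
    linear_combination ((u 3 - a) * (u 4 - a)) * hp0 + ((mlS u) * p 0 * (u 4 - a)) * hp3 +
      ((mlS u) ^ 2 * p 0 * p 3) * hp4
  have hL1 : L 1 = a * (mlS u) ^ 3 / ((u 0 - a) * (u 3 - a) * (u 4 - a)) := by
    rw [eq_div_iff hq]
    linear_combination (-(L 1)) * hm1 - (mlS u) ^ 3 * ha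
  refine ⟨a, hfa, ?_⟩
  have hP : p = (mlSol u a).1 := by
    funext i
    fin_cases i
    · show p 0 = (u 0 - a) / mlS u
      rw [eq_div_iff hs]; linear_combination hp0
    · show p 1 = (u 1 + a) / mlS u
      rw [eq_div_iff hs]; linear_combination hp1
    · show p 2 = (u 2 + a) / mlS u
      rw [eq_div_iff hs]; linear_combination hp2
    · show p 3 = (u 3 - a) / mlS u
      rw [eq_div_iff hs]; linear_combination hp3
    · show p 4 = (u 4 - a) / mlS u
      rw [eq_div_iff hs]; linear_combination hp4
    · show p 5 = (u 5 + a) / mlS u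
      rw [eq_div_iff hs]; linear_combination hp5
  have hL : L = (mlSol u a).2 := by
    funext i
    fin_cases i
    · show L 0 = mlS u
      exact hL0
    · show L 1 = a * (mlS u) ^ 3 / ((u 0 - a) * (u 3 - a) * (u 4 - a))
      exact hL1
  exact Prod.ext hP hL

/-- The 3×3 zero-diagonal matrix model has ML degree 2: for generic data `u`, the Lagrange
likelihood equations have exactly 2 complex solutions.  Here
`x.1 = (p₁₂, p₁₃, p₂₁, p₂₃, p₃₁, p₃₂)` and `x.2 = (λ_1, λ_2)`. -/
theorem zero_diagonal_matrix_model_ML_degree_two :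
    ∃ H : MvPolynomial (Fin 6) ℂ, H ≠ 0 ∧
      ∀ u : Fin 6 → ℂ, eval u H ≠ 0 →
        {x : (Fin 6 → ℂ) × (Fin 2 → ℂ) |
            (∀ i : Fin 6, x.1 i * (x.2 0 + eval x.1 (pderiv i zeroDiagG) * x.2 1) = u i) ∧
            eval x.1 zeroDiagG = 0 ∧
            x.1 0 + x.1 1 + x.1 2 + x.1 3 + x.1 4 + x.1 5 = 1}.ncard = 2 := by
  refine ⟨mlH, mlH_ne_zero, ?_⟩
  intro u hu
  rw [eval_mlH] at hu
  simp only [mul_ne_zero_iff] at hu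
  obtain ⟨⟨⟨⟨hs, hdisc⟩, hf0⟩, hf3⟩, hf4⟩ := hu
  obtain ⟨d, hd⟩ := IsAlgClosed.exists_pow_nat_eq (mlB u ^ 2 - 4 * mlS u * mlC u) zero_lt_two
  have hdne : d ≠ 0 := by intro h; apply hdisc; rw [← hd, h]; ring
  set a₁ := (-mlB u + d) / (2 * mlS u) with ha₁
  set a₂ := (-mlB u - d) / (2 * mlS u) with ha₂
  have hfac : ∀ y : ℂ, mlF u y = mlS u * (y - a₁) * (y - a₂) := by
    intro y
    rw [ha₁, ha₂]
    simp only [mlF]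
    field_simp
    linear_combination hd
  have ha12 : a₁ ≠ a₂ := by
    rw [ha₁, ha₂]
    intro h
    apply hdne
    field_simp at h
    linear_combination h / 2
  have hr1 : mlF u a₁ = 0 := by rw [hfac a₁]; ring
  have hr2 : mlF u a₂ = 0 := by rw [hfac a₂]; ring
  have hroots : ∀ a : ℂ, mlF u a = 0 → a = a₁ ∨ a = a₂ := by
    intro a h
    rw [hfac a] at h
    rcases mul_eq_zero.1 h with h' | h'
    · rcases mul_eq_zero.1 h' with h'' | h''
      · exact absurd h'' hs
      · exact Or.inl (sub_eq_zero.1 h'')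
    · exact Or.inr (sub_eq_zero.1 h')
  have hfj : ∀ j : Fin 6, mlF u (u j) ≠ 0 → (u j - a₁ ≠ 0 ∧ u j - a₂ ≠ 0) := by
    intro j hj
    rw [hfac (u j)] at hj
    simp only [mul_ne_zero_iff] at hj
    exact ⟨hj.1.2, hj.2⟩
  have hne : ∀ a : ℂ, mlF u a = 0 → (u 0 - a) * (u 3 - a) * (u 4 - a) ≠ 0 := by
    intro a hA
    rcases hroots a hA with rfl | rfl
    · exact mul_ne_zero (mul_ne_zero (hfj 0 hf0).1 (hfj 3 hf3).1) (hfj 4 hf4).1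
    · exact mul_ne_zero (mul_ne_zero (hfj 0 hf0).2 (hfj 3 hf3).2) (hfj 4 hf4).2
  have hss : {x : (Fin 6 → ℂ) × (Fin 2 → ℂ) |
      (∀ i : Fin 6, x.1 i * (x.2 0 + eval x.1 (pderiv i zeroDiagG) * x.2 1) = u i) ∧
      eval x.1 zeroDiagG = 0 ∧
      x.1 0 + x.1 1 + x.1 2 + x.1 3 + x.1 4 + x.1 5 = 1} = {mlSol u a₁, mlSol u a₂} := by
    ext x
    simp only [Set.mem_setOf_eq, Set.mem_insert_iff, Set.mem_singleton_iff]
    constructor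
    · intro hx
      rw [cond_iff] at hx
      obtain ⟨e0, e1, e2, e3, e4, e5, hg, hsum⟩ := hx
      obtain ⟨a, hA, hxa⟩ := sol_of_cond u hs hne x.1 x.2 e0 e1 e2 e3 e4 e5 hg hsum
      rcases hroots a hA with rfl | rfl
      · left; rw [← hxa]
      · right; rw [← hxa]
    · rintro (rfl | rfl)
      · exact mem_sol u hs a₁ hr1 (hfj 0 hf0).1 (hfj 3 hf3).1 (hfj 4 hf4).1
      · exact mem_sol u hs a₂ hr2 (hfj 0 hf0).2 (hfj 3 hf3).2 (hfj 4 hf4).2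
  rw [hss]
  refine Set.ncard_pair ?_
  intro h
  have h0 := congrArg (fun z => z.1 0) h
  simp only [mlSol10] at h0
  apply ha12
  field_simp at h0
  linear_combination -h0


end
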